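/- arXiv:2305.12911 — 5 statements merged into one kernel-verified Lean document; each statement's English description precedes it below -/
import Mathlib

section
/- Let a > 0, b ∈ ℝ, l1 < l2, and let φ : ℝ → ℝ be bounded and measurable. Define G(x, ξ, t) = (exp(−bt)/(2a·√(πt)))·exp(−(ξ−x)²/(4a²t)). If x ∈ (l1, l2) and φ is continuous at x, then lim_{t → 0⁺} ∫_{l1}^{l2} φ(ξ)·G(x, ξ, t) dξ = φ(x). -/
open MeasureTheory Real Filter Set intervalIntegral

/-- Approximate-identity property of the reaction–diffusion kernel: at an
interior point of continuity of the (bounded measurable) initial datum `φ`,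
`∫_{l1}^{l2} φ(ξ) G(x,ξ,t) dξ → φ(x)` as `t → 0⁺`. -/
theorem stmt_6 (a b l1 l2 : ℝ) (ha : 0 < a) (hl : l1 < l2)
    (φ : ℝ → ℝ) (hφm : Measurable φ) (hφb : ∃ C, ∀ ξ, |φ ξ| ≤ C)
    (G : ℝ → ℝ → ℝ → ℝ)
    (hG : ∀ y ξ τ, G y ξ τ
      = (Real.exp (-b * τ) / (2 * a * Real.sqrt (π * τ)))
          * Real.exp (-(ξ - y) ^ 2 / (4 * a ^ 2 * τ)))
    (x : ℝ) (hx : x ∈ Ioo l1 l2) (hφc : ContinuousAt φ x) :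
    Tendsto (fun t => ∫ ξ in l1..l2, φ ξ * G x ξ t)
      (nhdsWithin 0 (Ioi 0)) (nhds (φ x)) := by
  obtain ⟨C, hC⟩ := hφb
  have hC0 : 0 ≤ C := le_trans (abs_nonneg _) (hC 0)
  have hπ : (0:ℝ) < π := Real.pi_pos
  have hsπ : (0:ℝ) < Real.sqrt π := Real.sqrt_pos.mpr hπ
  have hx1 : l1 < x := hx.1
  have hx2 : x < l2 := hx.2
  set c : ℝ → ℝ := fun t => 2 * a * Real.sqrt t with hcdef
  set s1 : ℝ → ℝ := fun t => (l1 - x) / c t with hs1def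
  set s2 : ℝ → ℝ := fun t => (l2 - x) / c t with hs2def
  have hcpos : ∀ t : ℝ, 0 < t → 0 < c t := by
    intro t ht
    have h := Real.sqrt_pos.mpr ht
    simp only [hcdef]
    positivity
  set H : ℝ → ℝ → ℝ := fun t s =>
    Set.indicator (Ioc (s1 t) (s2 t))
      (fun s => Real.exp (-b * t) / Real.sqrt π * (φ (x + c t * s) * Real.exp (-s ^ 2))) s
    with hHdef
  -- Step 1: eventual equality with a Gaussian-type integral
  have key : ∀ᶠ t in nhdsWithin (0:ℝ) (Ioi 0),
      (∫ ξ in l1..l2, φ ξ * G x ξ t) = ∫ s, H t s := by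
    filter_upwards [self_mem_nhdsWithin] with t ht
    have ht : (0:ℝ) < t := ht
    have hct : 0 < c t := hcpos t ht
    have hst : (0:ℝ) < Real.sqrt t := Real.sqrt_pos.mpr ht
    have hcsq : c t ^ 2 = 4 * a ^ 2 * t := by
      simp only [hcdef]
      rw [mul_pow, mul_pow, Real.sq_sqrt ht.le]
      ring
    have hend1 : c t * s1 t + x = l1 := by
      simp only [hs1def]
      field_simp
      ring
    have hend2 : c t * s2 t + x = l2 := by
      simp only [hs2def]
      field_simp
      ring
    have hle : s1 t ≤ s2 t := by
      simp only [hs1def, hs2def]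
      gcongr
    have hpt : ∀ s : ℝ, c t * (φ (c t * s + x) * G x (c t * s + x) t)
        = Real.exp (-b * t) / Real.sqrt π * (φ (x + c t * s) * Real.exp (-s ^ 2)) := by
      intro s
      have h4 : (4 * a ^ 2 * t) ≠ 0 := by positivity
      have h5 : (c t * s + x - x) ^ 2 = 4 * a ^ 2 * t * s ^ 2 := by
        rw [← hcsq]; ring
      have hE : -(c t * s + x - x) ^ 2 / (4 * a ^ 2 * t) = -s ^ 2 := by
        rw [h5, neg_div, mul_div_cancel_left₀ _ h4]
      rw [hG x (c t * s + x) t, hE, add_comm (c t * s) x]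
      simp only [hcdef]
      rw [Real.sqrt_mul hπ.le]
      field_simp
    calc (∫ ξ in l1..l2, φ ξ * G x ξ t)
        = c t • ∫ s in s1 t..s2 t, φ (c t * s + x) * G x (c t * s + x) t := by
          have hA := intervalIntegral.integral_comp_mul_add (a := s1 t) (b := s2 t)
            (f := fun ξ => φ ξ * G x ξ t) hct.ne' x
          rw [hend1, hend2] at hA
          rw [hA, smul_smul, mul_inv_cancel₀ hct.ne', one_smul]
      _ = ∫ s in s1 t..s2 t, c t * (φ (c t * s + x) * G x (c t * s + x) t) := by
          rw [intervalIntegral.integral_const_mul, smul_eq_mul]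
      _ = ∫ s in s1 t..s2 t,
            Real.exp (-b * t) / Real.sqrt π * (φ (x + c t * s) * Real.exp (-s ^ 2)) :=
          intervalIntegral.integral_congr (fun s _ => hpt s)
      _ = ∫ s in Ioc (s1 t) (s2 t),
            Real.exp (-b * t) / Real.sqrt π * (φ (x + c t * s) * Real.exp (-s ^ 2)) :=
          intervalIntegral.integral_of_le hle
      _ = ∫ s, H t s := (MeasureTheory.integral_indicator measurableSet_Ioc).symm
  -- limits of the substitution data
  have hct0 : Tendsto c (nhdsWithin (0:ℝ) (Ioi 0)) (nhds 0) := by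
    have h : Tendsto (fun t : ℝ => 2 * a * Real.sqrt t) (nhds 0)
        (nhds (2 * a * Real.sqrt 0)) := (Real.continuous_sqrt.tendsto 0).const_mul _
    simp only [Real.sqrt_zero, mul_zero] at h
    rw [hcdef]
    exact h.mono_left nhdsWithin_le_nhds
  have hinv : Tendsto (fun t => (c t)⁻¹) (nhdsWithin (0:ℝ) (Ioi 0)) atTop := by
    apply tendsto_inv_nhdsGT_zero.comp
    rw [tendsto_nhdsWithin_iff]
    refine ⟨hct0, ?_⟩
    filter_upwards [self_mem_nhdsWithin] with t ht
    exact hcpos t ht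
  have hs1bot : Tendsto s1 (nhdsWithin (0:ℝ) (Ioi 0)) atBot := by
    have h := Tendsto.const_mul_atTop_of_neg (sub_neg.mpr hx1) hinv
    simp only [hs1def]
    simpa [div_eq_mul_inv] using h
  have hs2top : Tendsto s2 (nhdsWithin (0:ℝ) (Ioi 0)) atTop := by
    have h := Tendsto.const_mul_atTop (sub_pos.mpr hx2) hinv
    simp only [hs2def]
    simpa [div_eq_mul_inv] using h
  -- Step 2: dominated convergence
  have hgauss : Integrable (fun s : ℝ => Real.exp (-s ^ 2)) := by
    simpa using integrable_exp_neg_mul_sq (one_pos : (0:ℝ) < 1)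
  have hmeas : ∀ t : ℝ, AEStronglyMeasurable (H t) volume := by
    intro t
    apply Measurable.aestronglyMeasurable
    apply Measurable.indicator _ measurableSet_Ioc
    exact measurable_const.mul ((hφm.comp (by fun_prop)).mul (by fun_prop))
  have hbnd : ∀ᶠ t in nhdsWithin (0:ℝ) (Ioi 0), ∀ᵐ s : ℝ, ‖H t s‖
      ≤ Real.exp |b| / Real.sqrt π * (C * Real.exp (-s ^ 2)) := by
    have hmem : Ioc (0:ℝ) 1 ∈ nhdsWithin (0:ℝ) (Ioi 0) :=
        Ioc_mem_nhdsGT one_pos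
    filter_upwards [hmem] with t ht
    refine ae_of_all _ fun s => ?_
    have hexp : Real.exp (-b * t) ≤ Real.exp |b| := by
      apply Real.exp_le_exp.mpr
      calc -b * t ≤ |b| * t := mul_le_mul_of_nonneg_right (neg_le_abs b) ht.1.le
        _ ≤ |b| * 1 := mul_le_mul_of_nonneg_left ht.2 (abs_nonneg b)
        _ = |b| := mul_one _
    calc ‖H t s‖ ≤ ‖Real.exp (-b * t) / Real.sqrt π * (φ (x + c t * s) * Real.exp (-s ^ 2))‖ :=
          norm_indicator_le_norm_self _ _
      _ = Real.exp (-b * t) / Real.sqrt π * (|φ (x + c t * s)| * Real.exp (-s ^ 2)) := by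
          rw [Real.norm_eq_abs, abs_mul, abs_mul,
            abs_of_nonneg (by positivity : (0:ℝ) ≤ Real.exp (-b * t) / Real.sqrt π),
            abs_of_nonneg (Real.exp_pos _).le]
      _ ≤ Real.exp |b| / Real.sqrt π * (C * Real.exp (-s ^ 2)) := by
          gcongr
          · exact hC _
  have hlim : ∀ᵐ s : ℝ, Tendsto (fun t => H t s) (nhdsWithin (0:ℝ) (Ioi 0))
      (nhds (1 / Real.sqrt π * (φ x * Real.exp (-s ^ 2)))) := by
    refine ae_of_all _ fun s => ?_
    have harg : Tendsto (fun t => x + c t * s) (nhdsWithin (0:ℝ) (Ioi 0)) (nhds x) := by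
      have h := (tendsto_const_nhds (x := x)).add (hct0.mul_const s)
      simpa using h
    have hφt : Tendsto (fun t => φ (x + c t * s)) (nhdsWithin (0:ℝ) (Ioi 0)) (nhds (φ x)) :=
      hφc.tendsto.comp harg
    have hexp : Tendsto (fun t : ℝ => Real.exp (-b * t)) (nhdsWithin (0:ℝ) (Ioi 0)) (nhds 1) := by
      have h : Tendsto (fun t : ℝ => Real.exp (-b * t)) (nhds 0) (nhds (Real.exp (-b * 0))) :=
        (Real.continuous_exp.comp (continuous_const.mul continuous_id)).tendsto 0
      simp only [mul_zero, Real.exp_zero] at h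
      exact h.mono_left nhdsWithin_le_nhds
    have hlim' : Tendsto
        (fun t => Real.exp (-b * t) / Real.sqrt π * (φ (x + c t * s) * Real.exp (-s ^ 2)))
        (nhdsWithin (0:ℝ) (Ioi 0))
        (nhds (1 / Real.sqrt π * (φ x * Real.exp (-s ^ 2)))) :=
      (hexp.div_const _).mul (hφt.mul_const _)
    refine Tendsto.congr' ?_ hlim'
    filter_upwards [hs1bot.eventually (eventually_lt_atBot s),
      hs2top.eventually (eventually_ge_atTop s)] with t h1 h2
    simp only [hHdef]
    exact (Set.indicator_of_mem (Set.mem_Ioc.mpr ⟨h1, h2⟩)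
      (fun s => Real.exp (-b * t) / Real.sqrt π * (φ (x + c t * s) * Real.exp (-s ^ 2)))).symm
  have hDCT : Tendsto (fun t => ∫ s, H t s) (nhdsWithin (0:ℝ) (Ioi 0))
      (nhds (∫ s : ℝ, 1 / Real.sqrt π * (φ x * Real.exp (-s ^ 2)))) :=
    MeasureTheory.tendsto_integral_filter_of_dominated_convergence _
      (Eventually.of_forall hmeas) hbnd ((hgauss.const_mul C).const_mul _) hlim
  have hint : (∫ s : ℝ, 1 / Real.sqrt π * (φ x * Real.exp (-s ^ 2))) = φ x := by
    rw [MeasureTheory.integral_const_mul, MeasureTheory.integral_const_mul]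
    have h : (∫ s : ℝ, Real.exp (-s ^ 2)) = Real.sqrt π := by
      simpa using integral_gaussian 1
    rw [h]
    field_simp
  rw [hint] at hDCT
  exact Tendsto.congr' (key.mono fun t ht => ht.symm) hDCT
end

section
/- Let a > 0, η > 0, b ∈ ℝ and p ∈ ℝ with b + p > 0. Then ∫₀^{∞} exp(−pt)·(η/(2a·√π))·t^{−3/2}·exp(−bt)·exp(−η²/(4a²t)) dt = exp(−η·√(b+p)/a). -/
open MeasureTheory Real Set
open Filter Topology

noncomputable def myErf (x : ℝ) : ℝ := ∫ u in (0:ℝ)..x, Real.exp (-u ^ 2)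

lemma myErf_hasDerivAt (x : ℝ) : HasDerivAt myErf (Real.exp (-x ^ 2)) x := by
  have hc : Continuous fun u : ℝ => Real.exp (-u ^ 2) := by continuity
  exact (hc.integral_hasStrictDerivAt 0 x).hasDerivAt

lemma myErf_neg (x : ℝ) : myErf (-x) = -myErf x := by
  unfold myErf
  rw [← intervalIntegral.integral_symm, show (0:ℝ) = -0 by ring]
  rw [← intervalIntegral.integral_comp_neg (fun u => Real.exp (-u ^ 2))]
  simp [neg_sq]

lemma integrableOn_gauss : IntegrableOn (fun u : ℝ => Real.exp (-u ^ 2)) (Ioi 0) := by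
  have := (integrable_exp_neg_mul_sq (by norm_num : (0:ℝ) < 1)).integrableOn (s := Ioi 0)
  simpa using this

lemma myErf_tendsto_atTop : Tendsto myErf atTop (𝓝 (Real.sqrt π / 2)) := by
  have h := intervalIntegral_tendsto_integral_Ioi 0 integrableOn_gauss tendsto_id
  have : ∫ u in Ioi (0:ℝ), Real.exp (-u ^ 2) = Real.sqrt π / 2 := by
    have := integral_gaussian_Ioi 1
    simpa using this
  rwa [this] at h

lemma myErf_tendsto_atBot : Tendsto myErf atBot (𝓝 (-(Real.sqrt π / 2))) := by
  have h : Tendsto (fun x => myErf (-x)) atBot (𝓝 (Real.sqrt π / 2)) :=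
    myErf_tendsto_atTop.comp tendsto_neg_atBot_atTop
  have h2 : Tendsto (fun x => -myErf (-x)) atBot (𝓝 (-(Real.sqrt π / 2))) := h.neg
  refine h2.congr fun x => ?_
  rw [myErf_neg, neg_neg]

/-- Laplace transform identity `L{Γ(t)} = χ(η,p)` with
`Γ(t) = (η/(2a√π))·t^{−3/2}·exp(−bt − η²/(4a²t))` and
`χ(η,p) = exp(−η√(b+p)/a)`. -/
theorem stmt_10 (a η b p : ℝ) (ha : 0 < a) (hη : 0 < η) (hbp : 0 < b + p) :
    ∫ t in Ioi (0:ℝ),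
        Real.exp (-p * t) * (η / (2 * a * Real.sqrt π)) * t ^ (-(3:ℝ)/2)
          * Real.exp (-b * t) * Real.exp (-η ^ 2 / (4 * a ^ 2 * t))
      = Real.exp (-η * Real.sqrt (b + p) / a) := by
  set c : ℝ := η / a with hc_def
  set r : ℝ := Real.sqrt (b + p) with hr_def
  have hc : 0 < c := div_pos hη ha
  have hr : 0 < r := Real.sqrt_pos.2 hbp
  have hr2 : r ^ 2 = b + p := Real.sq_sqrt hbp.le
  have hπ : 0 < Real.sqrt π := Real.sqrt_pos.2 Real.pi_pos
  set F : ℝ → ℝ := fun t =>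
    (Real.exp (-(c * r)) *
        (1 - 2 / Real.sqrt π * myErf (c / (2 * Real.sqrt t) - r * Real.sqrt t))
      + Real.exp (c * r) *
        (1 - 2 / Real.sqrt π * myErf (c / (2 * Real.sqrt t) + r * Real.sqrt t))) / 2
    with hF_def
  set g : ℝ → ℝ := fun t => if t ≤ 0 then 0 else F t with hg_def
  have hg0 : g 0 = 0 := by simp [hg_def]
  -- continuity at 0 within Ici 0
  have hsqrt0 : Tendsto (fun t : ℝ => Real.sqrt t) (𝓝[>] (0:ℝ)) (𝓝[>] 0) := by
    apply tendsto_nhdsWithin_of_tendsto_nhds_of_eventually_within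
    · exact (Real.continuous_sqrt.tendsto' 0 0 (by simp)).mono_left nhdsWithin_le_nhds
    · filter_upwards [self_mem_nhdsWithin] with t ht
      exact Real.sqrt_pos.2 ht
  have hinv : Tendsto (fun t : ℝ => (Real.sqrt t)⁻¹) (𝓝[>] (0:ℝ)) atTop :=
    tendsto_inv_nhdsGT_zero.comp hsqrt0
  have hterm1 : Tendsto (fun t : ℝ => c / (2 * Real.sqrt t)) (𝓝[>] (0:ℝ)) atTop := by
    refine (Tendsto.const_mul_atTop (show (0:ℝ) < c / 2 by positivity) hinv).congr fun t => ?_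
    ring
  have hterm2 : Tendsto (fun t : ℝ => r * Real.sqrt t) (𝓝[>] (0:ℝ)) (𝓝 0) := by
    have h := ((Real.continuous_sqrt.tendsto' 0 0 (by simp)).mono_left
      (nhdsWithin_le_nhds (s := Ioi (0:ℝ)))).const_mul r
    simpa using h
  have hev01 : ∀ᶠ t in 𝓝[>] (0:ℝ), (-1:ℝ) ≤ -(r * Real.sqrt t) := by
    filter_upwards [hterm2.eventually (gt_mem_nhds (show (0:ℝ) < 1 by norm_num))] with t ht
    linarith
  have hev02 : ∀ᶠ t in 𝓝[>] (0:ℝ), (-1:ℝ) ≤ r * Real.sqrt t := by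
    filter_upwards [] with t
    have := mul_nonneg hr.le (Real.sqrt_nonneg t); linarith
  have hu1zero : Tendsto (fun t : ℝ => c / (2 * Real.sqrt t) - r * Real.sqrt t)
      (𝓝[>] (0:ℝ)) atTop := by
    have h := tendsto_atTop_add_right_of_le' _ (-1) hterm1 hev01
    exact h.congr fun t => by ring
  have hu2zero : Tendsto (fun t : ℝ => c / (2 * Real.sqrt t) + r * Real.sqrt t)
      (𝓝[>] (0:ℝ)) atTop :=
    tendsto_atTop_add_right_of_le' _ (-1) hterm1 hev02
  have hFzero : Tendsto F (𝓝[>] (0:ℝ)) (𝓝 0) := by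
    have h1 := myErf_tendsto_atTop.comp hu1zero
    have h2 := myErf_tendsto_atTop.comp hu2zero
    have hT : Tendsto F (𝓝[>] (0:ℝ))
        (𝓝 ((Real.exp (-(c * r)) * (1 - 2 / Real.sqrt π * (Real.sqrt π / 2))
          + Real.exp (c * r) * (1 - 2 / Real.sqrt π * (Real.sqrt π / 2))) / 2)) :=
      ((((h1.const_mul _).const_sub 1).const_mul _).add
        (((h2.const_mul _).const_sub 1).const_mul _)).div_const 2
    have he : (Real.exp (-(c * r)) * (1 - 2 / Real.sqrt π * (Real.sqrt π / 2))
          + Real.exp (c * r) * (1 - 2 / Real.sqrt π * (Real.sqrt π / 2))) / 2 = 0 := by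
      field_simp
      ring
    rwa [he] at hT
  have hcont : ContinuousWithinAt g (Ici (0:ℝ)) 0 := by
    rw [ContinuousWithinAt, hg0, ← Set.Ioi_insert, nhdsWithin_insert, tendsto_sup]
    constructor
    · simpa [hg0] using tendsto_pure_nhds g 0
    · refine Tendsto.congr' ?_ hFzero
      filter_upwards [self_mem_nhdsWithin] with t ht
      simp [hg_def, not_le.2 (mem_Ioi.1 ht)]
  -- limit at infinity
  have hsT : Tendsto (fun t : ℝ => Real.sqrt t) atTop atTop :=
    (tendsto_rpow_atTop (by norm_num : (0:ℝ) < 1/2)).congr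
      fun t => (Real.sqrt_eq_rpow t).symm
  have hinvT : Tendsto (fun t : ℝ => c / (2 * Real.sqrt t)) atTop (𝓝 0) := by
    have h := ((Tendsto.const_mul_atTop (show (0:ℝ) < 2 by norm_num)
        hsT).inv_tendsto_atTop).const_mul c
    simpa [div_eq_mul_inv] using h
  have hrT : Tendsto (fun t : ℝ => r * Real.sqrt t) atTop atTop :=
    Tendsto.const_mul_atTop hr hsT
  have hevT : ∀ᶠ t in (atTop : Filter ℝ), (-1:ℝ) ≤ -(c / (2 * Real.sqrt t)) := by
    filter_upwards [hinvT.eventually (gt_mem_nhds (show (0:ℝ) < 1 by norm_num))] with t ht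
    linarith
  have hu1T : Tendsto (fun t : ℝ => c / (2 * Real.sqrt t) - r * Real.sqrt t) atTop atBot := by
    have h : Tendsto (fun t : ℝ => r * Real.sqrt t + -(c / (2 * Real.sqrt t))) atTop atTop :=
      tendsto_atTop_add_right_of_le' _ (-1) hrT hevT
    have h2 := tendsto_neg_atTop_atBot.comp h
    refine h2.congr fun t => ?_
    simp only [Function.comp_apply]
    ring
  have hevT2 : ∀ᶠ t in (atTop : Filter ℝ), (-1:ℝ) ≤ c / (2 * Real.sqrt t) := by
    filter_upwards [] with t
    have h0 : (0:ℝ) ≤ c / (2 * Real.sqrt t) := by positivity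
    linarith
  have hu2T : Tendsto (fun t : ℝ => c / (2 * Real.sqrt t) + r * Real.sqrt t) atTop atTop := by
    have h := tendsto_atTop_add_right_of_le' _ (-1) hrT hevT2
    refine h.congr fun t => ?_
    ring
  have hgT : Tendsto g atTop (𝓝 (Real.exp (-(c * r)))) := by
    have h1 := myErf_tendsto_atBot.comp hu1T
    have h2 := myErf_tendsto_atTop.comp hu2T
    have hT : Tendsto F atTop
        (𝓝 ((Real.exp (-(c * r)) * (1 - 2 / Real.sqrt π * (-(Real.sqrt π / 2)))
          + Real.exp (c * r) * (1 - 2 / Real.sqrt π * (Real.sqrt π / 2))) / 2)) :=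
      ((((h1.const_mul _).const_sub 1).const_mul _).add
        (((h2.const_mul _).const_sub 1).const_mul _)).div_const 2
    have he : (Real.exp (-(c * r)) * (1 - 2 / Real.sqrt π * (-(Real.sqrt π / 2)))
          + Real.exp (c * r) * (1 - 2 / Real.sqrt π * (Real.sqrt π / 2))) / 2
        = Real.exp (-(c * r)) := by
      field_simp; ring
    rw [he] at hT
    refine Tendsto.congr' ?_ hT
    filter_upwards [eventually_gt_atTop (0:ℝ)] with t ht
    simp [hg_def, not_le.2 ht]
  -- nonnegativity of the integrand
  have hpos : ∀ x ∈ Ioi (0:ℝ), 0 ≤ Real.exp (-p * x) * (η / (2 * a * Real.sqrt π))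
      * x ^ (-(3:ℝ)/2) * Real.exp (-b * x) * Real.exp (-η ^ 2 / (4 * a ^ 2 * x)) := by
    intro x hx
    have hx0 : (0:ℝ) < x := hx
    positivity
  -- derivative
  have hderiv : ∀ x ∈ Ioi (0:ℝ), HasDerivAt g (Real.exp (-p * x) * (η / (2 * a * Real.sqrt π))
      * x ^ (-(3:ℝ)/2) * Real.exp (-b * x) * Real.exp (-η ^ 2 / (4 * a ^ 2 * x))) x := by
    rintro x hx
    obtain ⟨s, hs, rfl⟩ : ∃ s : ℝ, 0 < s ∧ x = s ^ 2 :=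
      ⟨Real.sqrt x, Real.sqrt_pos.2 hx, (Real.sq_sqrt (le_of_lt hx)).symm⟩
    have hss : Real.sqrt (s ^ 2) = s := Real.sqrt_sq hs.le
    have hs2 : (0:ℝ) < s ^ 2 := by positivity
    have hgF : g =ᶠ[𝓝 (s ^ 2)] F := by
      filter_upwards [eventually_gt_nhds hs2] with y hy
      simp [hg_def, not_le.2 hy]
    refine HasDerivAt.congr_of_eventuallyEq ?_ hgF
    -- derivative of F at s^2
    have hsqrtD : HasDerivAt (fun y : ℝ => Real.sqrt y) (1 / (2 * Real.sqrt (s ^ 2))) (s ^ 2) :=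
      Real.hasDerivAt_sqrt hs2.ne'
    have hden : HasDerivAt (fun y : ℝ => 2 * Real.sqrt y)
        (2 * (1 / (2 * Real.sqrt (s ^ 2)))) (s ^ 2) := hsqrtD.const_mul 2
    have hdne : 2 * Real.sqrt (s ^ 2) ≠ 0 := by rw [hss]; positivity
    have h1 : HasDerivAt (fun y : ℝ => c / (2 * Real.sqrt y))
        ((0 * (2 * Real.sqrt (s ^ 2)) - c * (2 * (1 / (2 * Real.sqrt (s ^ 2)))))
          / (2 * Real.sqrt (s ^ 2)) ^ 2) (s ^ 2) :=
      (hasDerivAt_const _ c).div hden hdne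
    have h2 : HasDerivAt (fun y : ℝ => r * Real.sqrt y)
        (r * (1 / (2 * Real.sqrt (s ^ 2)))) (s ^ 2) := hsqrtD.const_mul r
    set d1 : ℝ := (0 * (2 * Real.sqrt (s ^ 2)) - c * (2 * (1 / (2 * Real.sqrt (s ^ 2)))))
          / (2 * Real.sqrt (s ^ 2)) ^ 2 with hd1
    set d2 : ℝ := r * (1 / (2 * Real.sqrt (s ^ 2))) with hd2
    have hu1D := h1.sub h2
    have hu2D := h1.add h2
    have hE1D := ((myErf_hasDerivAt _).comp _ hu1D)
    have hE2D := ((myErf_hasDerivAt _).comp _ hu2D)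
    rw [Function.comp_def] at hE1D hE2D
    have hFD := ((((hE1D.const_mul (2 / Real.sqrt π)).const_sub 1).const_mul
        (Real.exp (-(c * r)))).add
      (((hE2D.const_mul (2 / Real.sqrt π)).const_sub 1).const_mul
        (Real.exp (c * r)))).div_const 2
    refine hFD.congr_deriv ?_
    symm
    simp only [Pi.sub_apply, Pi.add_apply]
    -- now a real-number identity
    rw [hss, hd1, hd2, hss]
    have hrpow : ((s:ℝ) ^ 2) ^ (-(3:ℝ)/2) = (s ^ 3)⁻¹ := by
      rw [← Real.rpow_natCast s 2, ← Real.rpow_mul hs.le,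
        show ((2:ℕ):ℝ) * (-(3:ℝ)/2) = -((3:ℕ):ℝ) by norm_num,
        Real.rpow_neg hs.le, Real.rpow_natCast]
    have hc2 : c ^ 2 = η ^ 2 / a ^ 2 := by rw [hc_def, div_pow]
    have habs1 : -(c / (2 * s) - r * s) ^ 2
        = c * r - (η ^ 2 / (4 * a ^ 2 * s ^ 2) + b * s ^ 2 + p * s ^ 2) := by
      have hexp : (c / (2 * s) - r * s) ^ 2 = c ^ 2 / (4 * s ^ 2) - c * r + r ^ 2 * s ^ 2 := by
        field_simp
        ring
      rw [hexp, hc2, hr2]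
      field_simp
      ring
    have habs2 : -(c / (2 * s) + r * s) ^ 2
        = -(c * r) - (η ^ 2 / (4 * a ^ 2 * s ^ 2) + b * s ^ 2 + p * s ^ 2) := by
      have hexp : (c / (2 * s) + r * s) ^ 2 = c ^ 2 / (4 * s ^ 2) + c * r + r ^ 2 * s ^ 2 := by
        field_simp
        ring
      rw [hexp, hc2, hr2]
      field_simp
      ring
    rw [habs1, habs2, hrpow,
      show -p * s ^ 2 = -(p * s ^ 2) by ring,
      show -b * s ^ 2 = -(b * s ^ 2) by ring,
      show -η ^ 2 / (4 * a ^ 2 * s ^ 2) = -(η ^ 2 / (4 * a ^ 2 * s ^ 2)) by ring,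
      Real.exp_neg, Real.exp_neg, Real.exp_neg, Real.exp_neg,
      Real.exp_sub, Real.exp_sub, Real.exp_add, Real.exp_add, Real.exp_neg, hc_def]
    have e1 := Real.exp_ne_zero (c * r)
    have e2 := Real.exp_ne_zero (η ^ 2 / (4 * a ^ 2 * s ^ 2))
    have e3 := Real.exp_ne_zero (b * s ^ 2)
    have e4 := Real.exp_ne_zero (p * s ^ 2)
    field_simp
    ring
  -- assemble
  have key := integral_Ioi_of_hasDerivAt_of_nonneg hcont hderiv hpos hgT
  rw [hg0, sub_zero] at key
  have hval : Real.exp (-(c * r)) = Real.exp (-η * Real.sqrt (b + p) / a) := by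
    rw [hc_def, hr_def]
    congr 1
    field_simp
  rw [hval] at key
  exact key
end

section
/- Let a > 0, b ≥ 0, L > 0, and let α₁, β₁, α₂, β₂ ∈ ℝ satisfy α₁² + β₁² ≠ 0 and α₂² + β₂² ≠ 0. Define, for p > 0, D(p) = −(1/4)·(a²α₁α₂ − aα₁β₂ + aα₂β₁)·exp(−2L·√(b+p)/a)/(b+p) + (1/4)·β₁β₂·exp(−2L·√(b+p)/a) + (1/4)·(a²α₁α₂ + aα₁β₂ − aα₂β₁)/(b+p) − (1/4)·β₁β₂. Then D is not identically zero on (0, ∞); that is, there exists p > 0 with D(p) ≠ 0. -/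
open Filter Topology

set_option maxHeartbeats 1000000 in
/-- The determinant `D(p)` of the Laplace-domain linear system (S) is not
identically zero on `(0, ∞)` under the admissibility conditions on the
boundary coefficients. -/
theorem stmt_14 (a b L : ℝ) (ha : 0 < a) (hb : 0 ≤ b) (hL : 0 < L)
    (α₁ β₁ α₂ β₂ : ℝ) (h1 : α₁ ^ 2 + β₁ ^ 2 ≠ 0) (h2 : α₂ ^ 2 + β₂ ^ 2 ≠ 0)
    (D : ℝ → ℝ)
    (hD : ∀ p, D p =
      -(1/4) * (a ^ 2 * α₁ * α₂ - a * α₁ * β₂ + a * α₂ * β₁)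
          * Real.exp (-2 * L * Real.sqrt (b + p) / a) / (b + p)
        + (1/4) * β₁ * β₂ * Real.exp (-2 * L * Real.sqrt (b + p) / a)
        + (1/4) * (a ^ 2 * α₁ * α₂ + a * α₁ * β₂ - a * α₂ * β₁) / (b + p)
        - (1/4) * β₁ * β₂) :
    ∃ p : ℝ, 0 < p ∧ D p ≠ 0 := by
  by_cases hββ : β₁ * β₂ = 0
  · -- evaluate at p = 1 and p = 4
    by_contra hcon
    push_neg at hcon
    have hq1 : (0:ℝ) < b + 1 := by linarith
    have hq4 : (0:ℝ) < b + 4 := by linarith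
    have hz1 : D 1 = 0 := hcon 1 one_pos
    have hz4 : D 4 = 0 := hcon 4 (by norm_num)
    rw [hD] at hz1 hz4
    obtain ⟨A, hA⟩ : ∃ A, a ^ 2 * α₁ * α₂ - a * α₁ * β₂ + a * α₂ * β₁ = A := ⟨_, rfl⟩
    obtain ⟨C, hC⟩ : ∃ C, a ^ 2 * α₁ * α₂ + a * α₁ * β₂ - a * α₂ * β₁ = C := ⟨_, rfl⟩
    obtain ⟨E1, hE1⟩ : ∃ E, Real.exp (-2 * L * Real.sqrt (b + 1) / a) = E := ⟨_, rfl⟩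
    obtain ⟨E2, hE2⟩ : ∃ E, Real.exp (-2 * L * Real.sqrt (b + 4) / a) = E := ⟨_, rfl⟩
    rw [hA, hC, hE1] at hz1
    rw [hA, hC, hE2] at hz4
    have hEne : E2 < E1 := by
      rw [← hE1, ← hE2]
      apply Real.exp_lt_exp.2
      have hs : Real.sqrt (b + 1) < Real.sqrt (b + 4) := by
        apply Real.sqrt_lt_sqrt (by linarith) (by linarith)
      rw [div_lt_div_iff_of_pos_right ha]
      nlinarith
    have h0 : (1:ℝ)/4 * β₁ * β₂ = 0 := by rw [mul_assoc, hββ, mul_zero]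
    rw [h0, zero_mul, add_zero, sub_zero] at hz1 hz4
    have e1 : A * E1 = C := by
      field_simp [hq1.ne'] at hz1
      have hm : (C - A * E1) * (4 * (b + 1)) = 0 := by linear_combination (4 * (b + 1)) * hz1
      rcases mul_eq_zero.1 hm with h | h
      · linarith
      · exact absurd h (by positivity)
    have e2 : A * E2 = C := by
      field_simp [hq4.ne'] at hz4
      have hm : (C - A * E2) * (4 * (b + 4)) = 0 := by linear_combination (4 * (b + 4)) * hz4
      rcases mul_eq_zero.1 hm with h | h
      · linarith
      · exact absurd h (by positivity)
    have hA0 : A = 0 := by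
      have h : A * (E1 - E2) = 0 := by nlinarith [e1, e2]
      rcases mul_eq_zero.1 h with h | h
      · exact h
      · exact absurd h (by nlinarith)
    have hC0 : C = 0 := by rw [hA0, zero_mul] at e1; exact e1.symm
    have hA0' : a ^ 2 * α₁ * α₂ - a * α₁ * β₂ + a * α₂ * β₁ = 0 := hA.trans hA0
    have hC0' : a ^ 2 * α₁ * α₂ + a * α₁ * β₂ - a * α₂ * β₁ = 0 := hC.trans hC0
    have hsum : α₁ * α₂ = 0 := by
      have hp : (2 * a ^ 2) * (α₁ * α₂) = 0 := by linear_combination hA0' + hC0'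
      rcases mul_eq_zero.1 hp with h | h
      · exact absurd h (by positivity)
      · exact h
    have hdiff : α₁ * β₂ = α₂ * β₁ := by
      have hp : (2 * a) * (α₁ * β₂ - α₂ * β₁) = 0 := by linear_combination hC0' - hA0'
      rcases mul_eq_zero.1 hp with h | h
      · exact absurd h (by positivity)
      · linarith
    rcases mul_eq_zero.1 hββ with hβ | hβ
    · have hα1 : α₁ ≠ 0 := fun h => h1 (by rw [h, hβ]; ring)
      have hα2 : α₂ = 0 := by
        rcases mul_eq_zero.1 hsum with h | h
        · exact absurd h hα1
        · exact h
      have hβ2 : β₂ = 0 := by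
        have h : α₁ * β₂ = 0 := by rw [hdiff, hβ, mul_zero]
        rcases mul_eq_zero.1 h with h | h
        · exact absurd h hα1
        · exact h
      exact h2 (by rw [hα2, hβ2]; ring)
    · have hα2 : α₂ ≠ 0 := fun h => h2 (by rw [h, hβ]; ring)
      have hα1 : α₁ = 0 := by
        rcases mul_eq_zero.1 hsum with h | h
        · exact h
        · exact absurd h hα2
      have hβ1 : β₁ = 0 := by
        have h : α₂ * β₁ = 0 := by rw [← hdiff, hβ, mul_zero]
        rcases mul_eq_zero.1 h with h | h
        · exact absurd h hα2
        · exact h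
      exact h1 (by rw [hα1, hβ1]; ring)
  · -- limit case: D(p) → -(1/4)β₁β₂ ≠ 0 as p → ∞
    have hq : Tendsto (fun p : ℝ => b + p) atTop atTop :=
      tendsto_atTop_add_const_left _ b tendsto_id
    have hsqrt : Tendsto Real.sqrt atTop atTop := by
      apply tendsto_atTop_atTop.2
      intro c
      exact ⟨max 0 c ^ 2, fun x hx => by
        have h0 : (0:ℝ) ≤ max 0 c := le_max_left _ _
        calc c ≤ max 0 c := le_max_right _ _
        _ = Real.sqrt ((max 0 c)^2) := by rw [Real.sqrt_sq h0]
        _ ≤ Real.sqrt x := Real.sqrt_le_sqrt hx⟩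
    have hs : Tendsto (fun p : ℝ => Real.sqrt (b + p)) atTop atTop := hsqrt.comp hq
    have hexparg : Tendsto (fun p : ℝ => -2 * L * Real.sqrt (b + p) / a) atTop atBot := by
      have hc : -2 * L / a < 0 := div_neg_of_neg_of_pos (by linarith) ha
      have h := hs.atTop_mul_const_of_neg hc
      apply h.congr
      intro p; ring
    have hE : Tendsto (fun p : ℝ => Real.exp (-2 * L * Real.sqrt (b + p) / a)) atTop (𝓝 0) :=
      Real.tendsto_exp_atBot.comp hexparg
    have hinv : Tendsto (fun p : ℝ => (b + p)⁻¹) atTop (𝓝 0) := hq.inv_tendsto_atTop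
    have hlim : Tendsto D atTop (𝓝 (-(1/4) * β₁ * β₂)) := by
      have ht : Tendsto (fun p : ℝ =>
          -(1/4) * (a ^ 2 * α₁ * α₂ - a * α₁ * β₂ + a * α₂ * β₁)
              * Real.exp (-2 * L * Real.sqrt (b + p) / a) * (b + p)⁻¹
            + (1/4) * β₁ * β₂ * Real.exp (-2 * L * Real.sqrt (b + p) / a)
            + (1/4) * (a ^ 2 * α₁ * α₂ + a * α₁ * β₂ - a * α₂ * β₁) * (b + p)⁻¹
            - (1/4) * β₁ * β₂) atTop
          (𝓝 (-(1/4) * (a ^ 2 * α₁ * α₂ - a * α₁ * β₂ + a * α₂ * β₁) * 0 * 0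
            + (1/4) * β₁ * β₂ * 0
            + (1/4) * (a ^ 2 * α₁ * α₂ + a * α₁ * β₂ - a * α₂ * β₁) * 0
            - (1/4) * β₁ * β₂)) :=
        ((((tendsto_const_nhds.mul hE).mul hinv).add
          (tendsto_const_nhds.mul hE)).add (tendsto_const_nhds.mul hinv)).sub tendsto_const_nhds
      rw [show -(1/4) * (a ^ 2 * α₁ * α₂ - a * α₁ * β₂ + a * α₂ * β₁) * (0:ℝ) * 0
            + (1/4) * β₁ * β₂ * 0
            + (1/4) * (a ^ 2 * α₁ * α₂ + a * α₁ * β₂ - a * α₂ * β₁) * 0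
            - (1/4) * β₁ * β₂ = -(1/4) * β₁ * β₂ by ring] at ht
      apply ht.congr
      intro p
      rw [hD p]
      ring
    have hne : -(1/4) * β₁ * β₂ ≠ 0 := by
      intro h
      apply hββ
      nlinarith
    have hev : ∀ᶠ p in atTop, D p ≠ 0 := hlim.eventually_ne hne
    exact ((eventually_gt_atTop 0).and hev).exists
end

section
/- Let a > 0, b ≥ 0, α₁ ∈ ℝ and β₁ ≠ 0. Then, as p → +∞, the function p ↦ −a/(β₁·√(b+p) − a·α₁) − ( −(a/β₁)·p^{−1/2} − (a²α₁/β₁²)·p^{−1} − (1/β₁)·(−(1/2)·a·b + a³α₁²/β₁²)·p^{−3/2} ) is O(p^{−2}). -/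
open Filter Asymptotics

/-- Second-order asymptotic expansion, as `p → +∞`, of the coefficient
`−a/(β₁√(b+p) − aα₁)` of `G₁(p)` in the boundary value `U(l1,p)`:
the remainder is `O(p⁻²)`. -/
theorem stmt_15 (a b α₁ β₁ : ℝ) (ha : 0 < a) (hb : 0 ≤ b) (hβ : β₁ ≠ 0) :
    (fun p : ℝ =>
        -a / (β₁ * Real.sqrt (b + p) - a * α₁)
          - (-(a / β₁) * p ^ (-(1:ℝ)/2)
              - (a ^ 2 * α₁ / β₁ ^ 2) * p⁻¹
              - (1 / β₁) * (-(1/2) * a * b + a ^ 3 * α₁ ^ 2 / β₁ ^ 2) * p ^ (-(3:ℝ)/2)))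
      =O[atTop] fun p : ℝ => p ^ (-(2:ℝ)) := by
  set G : ℝ → ℝ := fun t =>
    (-(a*b^2*t*(2+Real.sqrt (1+b*t^2))*β₁^2) + 2*a^2*α₁*b*β₁*(Real.sqrt (1+b*t^2)+1)
      - 2*a*α₁*((1/β₁)*(-(1/2)*a*b + a^3*α₁^2/β₁^2))*β₁^2*(Real.sqrt (1+b*t^2)+1)^2
      + 2*a^3*α₁^2*b*t*(Real.sqrt (1+b*t^2)+1))
    / (2*β₁^2*(Real.sqrt (1+b*t^2)+1)^2*(β₁*Real.sqrt (1+b*t^2) - a*α₁*t)) with hG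
  have hGcont : ContinuousAt G 0 := by
    apply ContinuousAt.div
    · fun_prop
    · fun_prop
    · norm_num [Real.sqrt_one]
      exact hβ
  have hsq : Tendsto Real.sqrt atTop atTop := by
    rw [tendsto_atTop_atTop]
    intro C
    refine ⟨(max C 0)^2, fun x hx => (le_max_left C 0).trans ?_⟩
    rw [← Real.sqrt_sq (le_max_right C 0)]
    exact Real.sqrt_le_sqrt hx
  have htinv : Tendsto (fun p : ℝ => (Real.sqrt p)⁻¹) atTop (nhds 0) :=
    tendsto_inv_atTop_zero.comp hsq
  have htend : Tendsto (fun p : ℝ => G ((Real.sqrt p)⁻¹)) atTop (nhds (G 0)) :=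
    hGcont.tendsto.comp htinv
  refine Asymptotics.isBigO_of_div_tendsto_nhds ?_ (G 0) ?_
  · filter_upwards [eventually_gt_atTop (0:ℝ)] with p hp h0
    exact absurd h0 (Real.rpow_pos_of_pos hp _).ne'
  · apply htend.congr'
    filter_upwards [eventually_ge_atTop (1 + (a*α₁/β₁)^2)] with p hp
    have hp1 : (1:ℝ) ≤ p := le_trans (le_add_of_nonneg_right (sq_nonneg _)) hp
    have hp0 : (0:ℝ) < p := lt_of_lt_of_le one_pos hp1
    have hsp : 0 < Real.sqrt p := Real.sqrt_pos.2 hp0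
    set t : ℝ := (Real.sqrt p)⁻¹ with htdef
    have ht0 : 0 < t := inv_pos.2 hsp
    have ht2 : t^2 = p⁻¹ := by rw [htdef, inv_pow, Real.sq_sqrt hp0.le]
    set s : ℝ := Real.sqrt (1 + b*t^2) with hsdef
    have hs1 : 1 ≤ s := Real.one_le_sqrt.2 (by nlinarith [sq_nonneg t])
    have hs2 : s^2 = 1 + b*t^2 := Real.sq_sqrt (by positivity)
    have hsbp : Real.sqrt (b + p) = s/t := by
      have hbp : b + p = (1 + b*t^2) * p := by
        rw [ht2]; field_simp; ring
      rw [hbp, Real.sqrt_mul (by positivity), ← hsdef, div_eq_mul_inv, htdef, inv_inv]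
    have e1 : p ^ (-(1:ℝ)/2) = t := by
      rw [show (-(1:ℝ)/2) = -(1/2) by norm_num, Real.rpow_neg hp0.le, ← Real.sqrt_eq_rpow]
    have e3 : p ^ (-(3:ℝ)/2) = t^3 := by
      rw [show (-(3:ℝ)/2) = ((1:ℝ)/2)*(-(3:ℕ):ℝ) by norm_num, Real.rpow_mul hp0.le,
        ← Real.sqrt_eq_rpow, Real.rpow_neg (Real.sqrt_nonneg p), Real.rpow_natCast,
        htdef, inv_pow]
    have e4 : p ^ (-(2:ℝ)) = t^4 := by
      rw [show (-(2:ℝ)) = ((1:ℝ)/2)*(-(4:ℕ):ℝ) by norm_num, Real.rpow_mul hp0.le,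
        ← Real.sqrt_eq_rpow, Real.rpow_neg (Real.sqrt_nonneg p), Real.rpow_natCast,
        htdef, inv_pow]
    have hspgt : |a*α₁/β₁| < Real.sqrt p := by
      rw [← Real.sqrt_sq_eq_abs]
      exact Real.sqrt_lt_sqrt (sq_nonneg _) (by nlinarith)
    have hden : β₁ * Real.sqrt (b + p) - a*α₁ ≠ 0 := by
      have h1 : Real.sqrt p ≤ Real.sqrt (b + p) := Real.sqrt_le_sqrt (by linarith)
      intro h
      have h2 : |β₁ * Real.sqrt (b+p)| = |a*α₁| := by
        rw [show β₁ * Real.sqrt (b+p) = a*α₁ by linarith]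
      rw [abs_mul, abs_of_nonneg (Real.sqrt_nonneg (b+p))] at h2
      have h3 : |a*α₁/β₁| * |β₁| = |a*α₁| := by
        rw [abs_div]; field_simp
      have hβa : 0 < |β₁| := abs_pos.2 hβ
      have h4 : |a*α₁| < |β₁| * Real.sqrt (b+p) := by
        calc |a*α₁| = |a*α₁/β₁| * |β₁| := h3.symm
        _ < Real.sqrt p * |β₁| := mul_lt_mul_of_pos_right hspgt hβa
        _ ≤ Real.sqrt (b+p) * |β₁| := mul_le_mul_of_nonneg_right h1 (abs_nonneg _)
        _ = |β₁| * Real.sqrt (b+p) := mul_comm _ _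
      linarith
    have hden' : β₁ * (s/t) - a*α₁ ≠ 0 := by rw [← hsbp]; exact hden
    have hden2 : β₁*s - a*α₁*t ≠ 0 := by
      have hh : β₁*s - a*α₁*t = t*(β₁*(s/t) - a*α₁) := by
        field_simp
      rw [hh]
      exact mul_ne_zero ht0.ne' hden'
    simp only [Pi.div_apply]
    rw [hsbp, e1, e3, e4, ← ht2, hG]
    beta_reduce
    rw [← hsdef]
    have hs1' : s + 1 ≠ 0 := by positivity
    have hden2b : β₁ * s - t * (a*α₁) ≠ 0 := by
      rw [show β₁ * s - t * (a*α₁) = β₁ * s - a * α₁ * t by ring]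
      exact hden2
    clear_value s t
    have hd3 : s * β₁ - a * t * α₁ ≠ 0 := by
      rw [show s * β₁ - a * t * α₁ = β₁ * s - a * α₁ * t by ring]; exact hden2
    have hbt : b = (s^2 - 1)/t^2 := by
      rw [eq_div_iff (by positivity)]; linarith [hs2]
    subst hbt
    field_simp
    ring
end

section
/- Let p > 0 and define R : ℝ → ℝ by R(x) = −(1/(8·p^{3/2}))·( −4x·√p + 2·exp(2(x−5)·√p) − exp(−2x·√p) − exp(2(x−10)·√p) ). Then for every x ∈ (0, 5), −(1/4)·R''(x) + p·R(x) = x/2. -/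
open Set

private lemma exp_deriv_aux (a b s : ℝ) (x : ℝ) :
    HasDerivAt (fun x : ℝ => Real.exp (a * (x - b) * s))
      (a * s * Real.exp (a * (x - b) * s)) x := by
  have harg : HasDerivAt (fun x : ℝ => a * (x - b) * s) (a * s) x := by
    have := (((hasDerivAt_id x).sub_const b).const_mul a).mul_const s
    simpa using this
  simpa [mul_comm] using harg.exp

private lemma exp_deriv_aux2 (a s : ℝ) (x : ℝ) :
    HasDerivAt (fun x : ℝ => Real.exp (a * x * s))
      (a * s * Real.exp (a * x * s)) x := by
  have harg : HasDerivAt (fun x : ℝ => a * x * s) (a * s) x := by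
    have := ((hasDerivAt_id x).const_mul a).mul_const s
    simpa using this
  simpa [mul_comm] using harg.exp

private lemma first_deriv (c s : ℝ) (x : ℝ) :
    HasDerivAt (fun x : ℝ => c * (-4 * x * s + 2 * Real.exp (2 * (x - 5) * s)
        - Real.exp (-2 * x * s) - Real.exp (2 * (x - 10) * s)))
      (c * (-4 * s + 4 * s * Real.exp (2 * (x - 5) * s)
        + 2 * s * Real.exp (-2 * x * s) - 2 * s * Real.exp (2 * (x - 10) * s))) x := by
  have h0 : HasDerivAt (fun x : ℝ => -4 * x * s) (-4 * s) x := by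
    have := ((hasDerivAt_id x).const_mul (-4 : ℝ)).mul_const s
    simpa using this
  have h1 := exp_deriv_aux 2 5 s x
  have h2 := exp_deriv_aux2 (-2) s x
  have h3 := exp_deriv_aux 2 10 s x
  have := (((h0.add (h1.const_mul 2)).sub h2).sub h3).const_mul c
  simp only [Pi.add_apply, Pi.sub_apply] at this
  exact this.congr_deriv (by ring)

private lemma second_deriv (c s : ℝ) (x : ℝ) :
    HasDerivAt (fun x : ℝ => c * (-4 * s + 4 * s * Real.exp (2 * (x - 5) * s)
        + 2 * s * Real.exp (-2 * x * s) - 2 * s * Real.exp (2 * (x - 10) * s)))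
      (c * (8 * s * s * Real.exp (2 * (x - 5) * s)
        - 4 * s * s * Real.exp (-2 * x * s) - 4 * s * s * Real.exp (2 * (x - 10) * s))) x := by
  have h1 := exp_deriv_aux 2 5 s x
  have h2 := exp_deriv_aux2 (-2) s x
  have h3 := exp_deriv_aux 2 10 s x
  have := ((((hasDerivAt_const x (-4 * s)).add (h1.const_mul (4 * s))).add
      (h2.const_mul (2 * s))).sub (h3.const_mul (2 * s))).const_mul c
  simp only [Pi.add_apply, Pi.sub_apply] at this
  exact this.congr_deriv (by ring)

/-- Verification in the Laplace domain that the remaining term `R(x,p)` of the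
operational solution satisfies `−(1/4)R'' + pR = x/2` on `(0, 5)`. -/
theorem stmt_19 (p : ℝ) (hp : 0 < p) (R : ℝ → ℝ)
    (hR : ∀ x, R x = -(1 / (8 * p ^ ((3:ℝ)/2))) *
      (-4 * x * Real.sqrt p + 2 * Real.exp (2 * (x - 5) * Real.sqrt p)
        - Real.exp (-2 * x * Real.sqrt p) - Real.exp (2 * (x - 10) * Real.sqrt p))) :
    ∀ x ∈ Ioo (0:ℝ) 5, -(1/4) * deriv (deriv R) x + p * R x = x / 2 := by
  intro x hx
  set s := Real.sqrt p with hs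
  set c := -(1 / (8 * p ^ ((3:ℝ)/2))) with hc
  have hRe : R = fun x => c * (-4 * x * s + 2 * Real.exp (2 * (x - 5) * s)
      - Real.exp (-2 * x * s) - Real.exp (2 * (x - 10) * s)) := funext hR
  subst hRe
  have hd1 : deriv (fun x : ℝ => c * (-4 * x * s + 2 * Real.exp (2 * (x - 5) * s)
      - Real.exp (-2 * x * s) - Real.exp (2 * (x - 10) * s)))
      = fun x : ℝ => c * (-4 * s + 4 * s * Real.exp (2 * (x - 5) * s)
        + 2 * s * Real.exp (-2 * x * s) - 2 * s * Real.exp (2 * (x - 10) * s)) :=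
    funext fun y => (first_deriv c s y).deriv
  rw [hd1, (second_deriv c s x).deriv]
  have hs0 : 0 < s := Real.sqrt_pos.mpr hp
  have hss : s * s = p := Real.mul_self_sqrt hp.le
  have hp32 : p ^ ((3:ℝ)/2) = s * s * s := by
    rw [show (3:ℝ)/2 = 1 + 1/2 by norm_num, Real.rpow_add hp, Real.rpow_one,
      ← Real.sqrt_eq_rpow, ← hs, ← hss]
  rw [hc, hp32, ← hss]
  field_simp
  ring
end
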